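/- Let k ≥ 2, let A = fromBlocks (J − I) R Rᵀ 0 be the adjacency matrix of a split graph with s-partition of sizes k and s, and let r = Rᵀ·𝟙 ∈ ℝˢ be the vector of column sums of R. Then det(A) = (−1)^{k−1}·(k−1)·det(RᵀR − (1/(k−1))·r·rᵀ). Furthermore, if ker(R) = {0}, then det(RᵀR − (1/(k−1))·r·rᵀ) = (1 − (1/(k−1))·rᵀ·(RᵀR)⁻¹·r)·det(RᵀR). -/

import Mathlib

open Matrix

/-- For `k ≥ 2`, with `r = Rᵀ 𝟙` the vector of column sums of
`R`, the determinant of the adjacency matrix `A = fromBlocks (J - I) R Rᵀ 0` of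
the split graph satisfies
`det A = (-1)^(k-1) (k-1) det(RᵀR - (1/(k-1)) r rᵀ)`; moreover if
`ker R = {0}` then
`det(RᵀR - (1/(k-1)) r rᵀ) = (1 - (1/(k-1)) rᵀ (RᵀR)⁻¹ r) det(RᵀR)`. -/
theorem stmt_19 (k s : ℕ) (hk : 2 ≤ k)
    (R : Matrix (Fin k) (Fin s) ℝ) (hR01 : ∀ i j, R i j = 0 ∨ R i j = 1)
    (J : Matrix (Fin k) (Fin k) ℝ) (hJ : ∀ i j, J i j = 1)
    (A : Matrix (Fin k ⊕ Fin s) (Fin k ⊕ Fin s) ℝ)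
    (hA : A = Matrix.fromBlocks (J - 1) R Rᵀ 0)
    (r : Fin s → ℝ) (hr : r = Matrix.mulVec Rᵀ (fun _ => 1)) :
    A.det = (-1) ^ (k - 1) * ((k : ℝ) - 1) *
        (Rᵀ * R - ((k : ℝ) - 1)⁻¹ • Matrix.vecMulVec r r).det ∧
    ((∀ z : Fin s → ℝ, R.mulVec z = 0 → z = 0) →
      (Rᵀ * R - ((k : ℝ) - 1)⁻¹ • Matrix.vecMulVec r r).det =
        (1 - ((k : ℝ) - 1)⁻¹ * (r ⬝ᵥ Matrix.mulVec (Rᵀ * R)⁻¹ r)) *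
          (Rᵀ * R).det) := by
  have hk2 : (2:ℝ) ≤ (k:ℝ) := by exact_mod_cast hk
  have hk1 : ((k:ℝ) - 1) ≠ 0 := by linarith
  set c : ℝ := ((k:ℝ) - 1)⁻¹ with hc
  have hJJ : J * J = (k:ℝ) • J := by
    ext i j
    simp [mul_apply, hJ]
  have hck : c * (k:ℝ) = 1 + c := by
    rw [hc, inv_mul_eq_iff_eq_mul₀ hk1, mul_add, mul_inv_cancel₀ hk1]
    ring
  set B : Matrix (Fin k) (Fin k) ℝ := c • J - 1 with hB
  have hprod : (J - 1) * B = 1 := by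
    rw [hB, sub_mul, one_mul, mul_sub, mul_one, mul_smul_comm, hJJ, smul_smul, hck,
      add_smul, one_smul]
    abel
  have hprod2 : B * (J - 1) = 1 := by
    rw [hB, mul_sub, mul_one, sub_mul, one_mul, smul_mul_assoc, hJJ, smul_smul, hck,
      add_smul, one_smul]
    abel
  haveI : Invertible (J - 1) := ⟨B, hprod2, hprod⟩
  have hinv : ⅟(J - 1) = B := invOf_eq_right_inv hprod
  have hRJR : Rᵀ * J * R = vecMulVec r r := by
    ext i j
    simp [mul_apply, vecMulVec, hJ, hr, mulVec, dotProduct, Finset.sum_mul, Finset.mul_sum]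
  have hmid : (0 : Matrix (Fin s) (Fin s) ℝ) - Rᵀ * B * R
      = Rᵀ * R - c • vecMulVec r r := by
    rw [hB, Matrix.mul_sub, Matrix.mul_one, Matrix.sub_mul, Matrix.mul_smul, Matrix.smul_mul, hRJR, zero_sub, neg_sub]
  have h1J : (1 : Matrix (Fin k) (Fin k) ℝ) - J
      = 1 + replicateCol (Fin 1) (fun _ => (-1:ℝ)) * replicateRow (Fin 1) (fun _ => (1:ℝ)) := by
    ext i j
    simp [mul_apply, hJ, sub_eq_add_neg]
  have hdetJ : (J - 1).det = (-1:ℝ)^(k-1) * ((k:ℝ) - 1) := by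
    rw [show J - 1 = -((1:Matrix (Fin k) (Fin k) ℝ) - J) from (neg_sub _ _).symm, det_neg,
      h1J]
    erw [det_one_add_replicateCol_mul_replicateRow]
    obtain ⟨m, rfl⟩ : ∃ m, k = m + 1 := ⟨k - 1, by omega⟩
    simp [dotProduct, pow_succ]
  constructor
  · rw [hA, det_fromBlocks₁₁, hinv, hmid, hdetJ]
  · intro hker
    have hMinj : Function.Injective ((Rᵀ * R).mulVec) := by
      have key : ∀ z, (Rᵀ * R).mulVec z = 0 → z = 0 := by
        intro z hz
        have h0 : R.mulVec z ⬝ᵥ R.mulVec z = 0 := by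
          have h1 : z ⬝ᵥ ((Rᵀ * R).mulVec z) = R.mulVec z ⬝ᵥ R.mulVec z := by
            rw [← mulVec_mulVec, dotProduct_mulVec, vecMul_transpose]
          rw [hz] at h1
          simpa using h1.symm
        exact hker z (by simpa using h0)
      intro x y h
      have := key (x - y) (by rw [mulVec_sub, h, sub_self])
      exact sub_eq_zero.mp this
    have hMunit : IsUnit (Rᵀ * R) := mulVec_injective_iff_isUnit.mp hMinj
    have hMdet : IsUnit (Rᵀ * R).det := (isUnit_iff_isUnit_det _).mp hMunit
    have hsplit : Rᵀ * R - c • vecMulVec r r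
        = Rᵀ * R + replicateCol (Fin 1) (-(c • r)) * replicateRow (Fin 1) r := by
      erw [← vecMulVec_eq]
      ext i j
      simp [vecMulVec]
      ring
    rw [hsplit]
    erw [det_add_replicateCol_mul_replicateRow hMdet]
    have hdot : (replicateRow (Fin 1) r * (Rᵀ * R)⁻¹ * replicateCol (Fin 1) (-(c • r))) default default
        = -(c * (r ⬝ᵥ (Rᵀ * R)⁻¹ *ᵥ r)) := by
      simp [mul_apply, dotProduct, mulVec, Finset.sum_mul, Finset.mul_sum, mul_assoc]
      rw [Finset.sum_comm]
      exact Finset.sum_congr rfl fun i _ => Finset.sum_congr rfl fun j _ => by ring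
    have h11 : (1 + replicateRow (Fin 1) r * (Rᵀ * R)⁻¹ * replicateCol (Fin 1) (-(c • r))).det
        = 1 - c * (r ⬝ᵥ (Rᵀ * R)⁻¹ *ᵥ r) := by
      rw [det_unique, Matrix.add_apply, one_apply_eq, hdot]
      ring
    have final : (Rᵀ * R).det * (1 + replicateRow (Fin 1) r * (Rᵀ * R)⁻¹ * replicateCol (Fin 1) (-(c • r))).det
        = (1 - c * (r ⬝ᵥ (Rᵀ * R)⁻¹ *ᵥ r)) * (Rᵀ * R).det := by rw [h11]; ring
    convert final using 2
    congr!
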